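/- Let Λ be an ℝ-linear map on n×n complex matrices sending Hermitian matrices to Hermitian matrices, and let Λ* be a trace adjoint of Λ. Let ρ, σ be positive definite matrices such that Λ(ρ) and Λ(σ) are positive definite. Let D̃₂ denote the sandwiched Rényi relative entropy with α = 2, i.e., D̃₂(ρ,σ) = log(tr[(σ^{−1/4}·ρ·σ^{−1/4})²]). Suppose that for all Hermitian M₁, M₂ in some neighborhood of 0 the matrices ρ+M₁, σ+M₂, Λ(ρ+M₁), Λ(σ+M₂) are positive definite and D̃₂(ρ+M₁, σ+M₂) ≥ D̃₂(Λ(ρ+M₁), Λ(σ+M₂)), and that D̃₂(ρ,σ) = D̃₂(Λ(ρ),Λ(σ)). Then the Petz map recovers ρ: σ^{1/2}·Λ*(Λ(σ)^{−1/2}·Λ(ρ)·Λ(σ)^{−1/2})·σ^{1/2} = ρ. -/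

import Mathlib

open Matrix
open scoped ComplexOrder

attribute [local instance] Matrix.frobeniusNormedAddCommGroup Matrix.frobeniusNormedSpace

/-- The real power `A^t` of a Hermitian matrix, via the continuous functional calculus. -/
noncomputable def matPow {n : Type*} [Fintype n] [DecidableEq n]
    (A : Matrix n n ℂ) (t : ℝ) : Matrix n n ℂ :=
  cfc (fun x : ℝ => x ^ t) A

/-- The sandwiched Rényi relative entropy with `α = 2`:
`D̃₂(ρ,σ) = log tr[(σ^{−1/4} ρ σ^{−1/4})²]`. -/
noncomputable def sandwichedRenyiTwo {n : Type*} [Fintype n] [DecidableEq n]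
    (ρ σ : Matrix n n ℂ) : ℝ :=
  Real.log ((((matPow σ (-(1/4)) * ρ * matPow σ (-(1/4))) ^ 2).trace).re)

section Aux

variable {n : Type*} [Fintype n] [DecidableEq n]

private lemma trace_nondegen (X : Matrix n n ℂ)
    (h : ∀ A : Matrix n n ℂ, (A * X).trace = 0) : X = 0 := by
  ext i j
  have h2 := h (Matrix.single j i 1)
  rw [Matrix.trace] at h2
  have h3 : ∀ k, (Matrix.single j i (1:ℂ) * X).diag k = if k = j then X i k else 0 := by
    intro k
    by_cases hk : k = j
    · subst hk; simp [Matrix.diag]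
    · simp [Matrix.diag, Matrix.single_mul_apply_of_ne (c := (1:ℂ)) j i k k hk, hk]
  rw [Finset.sum_congr rfl (fun k _ => h3 k)] at h2
  simpa using h2

private lemma trace_eq_of_forall (X Y : Matrix n n ℂ)
    (h : ∀ A : Matrix n n ℂ, (A * X).trace = (A * Y).trace) : X = Y := by
  have := trace_nondegen (X - Y) (fun A => by
    rw [Matrix.mul_sub, Matrix.trace_sub, h, sub_self])
  linear_combination (norm := module) this

private lemma herm_trace_sq_re (H : Matrix n n ℂ) (hH : H.IsHermitian) :
    ((H * H).trace).re = ∑ i, ∑ j, Complex.normSq (H j i) := by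
  have : H * H = Hᴴ * H := by rw [hH.eq]
  rw [this, Matrix.trace, Complex.re_sum]
  congr 1; ext i
  rw [Matrix.diag, Matrix.mul_apply, Complex.re_sum]
  congr 1; ext j
  simp [Matrix.conjTranspose_apply, Complex.normSq, Complex.mul_re]

private lemma herm_trace_sq_pos (H : Matrix n n ℂ) (hH : H.IsHermitian) (h0 : H ≠ 0) :
    0 < ((H * H).trace).re := by
  rw [herm_trace_sq_re H hH]
  have : ∃ j i, H j i ≠ 0 := by
    by_contra hc
    push_neg at hc
    exact h0 (by ext a b; simpa using hc a b)
  obtain ⟨j, i, hji⟩ := this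
  have hpos : 0 < Complex.normSq (H j i) := Complex.normSq_pos.mpr hji
  calc (0:ℝ) < Complex.normSq (H j i) := hpos
    _ ≤ ∑ i', ∑ j', Complex.normSq (H j' i') := by
        apply Finset.single_le_sum (f := fun i' => ∑ j', Complex.normSq (H j' i'))
          (fun _ _ => Finset.sum_nonneg fun _ _ => Complex.normSq_nonneg _) (Finset.mem_univ i)
          |>.trans' ?_
        exact Finset.single_le_sum (f := fun j' => Complex.normSq (H j' i))
          (fun _ _ => Complex.normSq_nonneg _) (Finset.mem_univ j)

private lemma herm_trace_sq_eq_zero (H : Matrix n n ℂ) (hH : H.IsHermitian)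
    (h : ((H * H).trace).re = 0) : H = 0 := by
  by_contra h0
  exact absurd h (ne_of_gt (herm_trace_sq_pos H hH h0))

private lemma spectrum_pos' {A : Matrix n n ℂ} (hA : A.PosDef) : ∀ x ∈ spectrum ℝ A, 0 < x := by
  intro x hx
  rw [hA.isHermitian.spectrum_real_eq_range_eigenvalues] at hx
  obtain ⟨i, rfl⟩ := hx
  exact hA.eigenvalues_pos i

private lemma rpow_contOn {A : Matrix n n ℂ} (hA : A.PosDef) (t : ℝ) :
    ContinuousOn (fun x : ℝ => x ^ t) (spectrum ℝ A) := fun x hx =>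
  ((Real.continuousAt_rpow_const x t (Or.inl (spectrum_pos' hA x hx).ne')).continuousWithinAt)

private lemma matPow_isHermitian (A : Matrix n n ℂ) (t : ℝ) : (matPow A t).IsHermitian :=
  cfc_predicate (R := ℝ) (fun x : ℝ => x ^ t) A

private lemma matPow_mul {A : Matrix n n ℂ} (hA : A.PosDef) (s t : ℝ) :
    matPow A s * matPow A t = matPow A (s + t) := by
  rw [matPow, matPow, matPow, ← cfc_mul _ _ A (rpow_contOn hA s) (rpow_contOn hA t)]
  exact cfc_congr fun x hx => (Real.rpow_add (spectrum_pos' hA x hx) s t).symm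

private lemma matPow_mul_eq_one {A : Matrix n n ℂ} (hA : A.PosDef) {s t : ℝ} (h : s + t = 0) :
    matPow A s * matPow A t = 1 := by
  rw [matPow_mul hA, h]
  have h1 : matPow A 0 = cfc (1 : ℝ → ℝ) A := cfc_congr fun x _ => Real.rpow_zero x
  rw [h1]; exact cfc_one ℝ A (hA.isHermitian : IsSelfAdjoint A)

private lemma conj_isHermitian {A B : Matrix n n ℂ} (hA : A.IsHermitian) (hB : B.IsHermitian) :
    (B * A * B).IsHermitian := by
  rw [Matrix.IsHermitian, Matrix.conjTranspose_mul, Matrix.conjTranspose_mul, hA.eq, hB.eq,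
    mul_assoc]

private lemma posDef_ne_zero [Nonempty n] {A : Matrix n n ℂ} (hA : A.PosDef) : A ≠ 0 := by
  intro h
  obtain ⟨i⟩ := ‹Nonempty n›
  have hx : (Pi.single i 1 : n → ℂ) ≠ 0 := by
    intro hc
    have := congrFun hc i
    simp at this
  have := (Matrix.posDef_iff_dotProduct_mulVec.mp hA).2 hx
  rw [h] at this
  simp at this

private lemma conj_ne_zero {A S Q : Matrix n n ℂ} (hQS : Q * S = 1) (hSQ : S * Q = 1)
    (hA : A ≠ 0) : S * A * S ≠ 0 := by
  intro h
  apply hA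
  have key : Q * (S * A * S) * Q = A := by
    calc Q * (S * A * S) * Q = (Q * S) * A * (S * Q) := by noncomm_ring
    _ = A := by rw [hQS, hSQ, one_mul, mul_one]
  rw [h] at key
  simp only [Matrix.mul_zero, Matrix.zero_mul] at key
  exact key.symm

private lemma quad_linear_zero {a b δ : ℝ} (hδ : 0 < δ)
    (h : ∀ t : ℝ, |t| < δ → 0 ≤ a * t + b * t ^ 2) : a = 0 := by
  by_contra ha
  have habs : 0 < |a| := abs_pos.mpr ha
  have hb1 : 0 < |b| + 1 := by positivity
  set c : ℝ := min (δ / 2) (|a| / (2 * (|b| + 1))) with hc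
  have hcpos : 0 < c := lt_min (by linarith) (by positivity)
  have hc1 : c ≤ δ / 2 := min_le_left _ _
  have hc2 : c ≤ |a| / (2 * (|b| + 1)) := min_le_right _ _
  have hbc : |b| * c ≤ |a| / 2 := by
    have h1 := mul_le_mul_of_nonneg_left hc2 (abs_nonneg b)
    have h2 : |b| * (|a| / (2 * (|b| + 1))) ≤ |a| / 2 := by
      rw [← mul_div_assoc, div_le_div_iff₀ (by positivity) two_pos]
      nlinarith [abs_nonneg a, abs_nonneg b]
    linarith
  have hbig : ∀ t : ℝ, |t| = c → 0 ≤ a * t + b * t ^ 2 := fun t htc =>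
    h t (by rw [htc]; linarith)
  rcases lt_or_ge 0 a with h' | h'
  · have hk := hbig (-c) (by rw [abs_neg, abs_of_pos hcpos])
    have hab : |a| = a := abs_of_pos h'
    have hbb : b * (-c) ^ 2 ≤ |b| * c ^ 2 := by
      have hcc : (-c) ^ 2 = c ^ 2 := by ring
      rw [hcc]; exact mul_le_mul_of_nonneg_right (le_abs_self b) (by positivity)
    nlinarith [mul_le_mul_of_nonneg_right hbc hcpos.le, mul_pos habs hcpos]
  · have haneg : a < 0 := lt_of_le_of_ne h' ha
    have hk := hbig c (abs_of_pos hcpos)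
    have hab : |a| = -a := abs_of_neg haneg
    have hbb : b * c ^ 2 ≤ |b| * c ^ 2 :=
      mul_le_mul_of_nonneg_right (le_abs_self b) (by positivity)
    nlinarith [mul_le_mul_of_nonneg_right hbc hcpos.le, mul_pos habs hcpos]

private lemma sq_trace_expand (X K : Matrix n n ℂ) (t : ℝ) :
    (((X + t • K) ^ 2).trace).re
      = ((X ^ 2).trace).re + t * (2 * ((X * K).trace).re) + t ^ 2 * ((K ^ 2).trace).re := by
  have hexp : (X + t • K) ^ 2 = X ^ 2 + t • (X * K) + t • (K * X) + (t ^ 2) • (K ^ 2) := by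
    simp only [sq, add_mul, mul_add, smul_add, mul_smul_comm, smul_mul_assoc, smul_smul]
    abel
  rw [hexp, Matrix.trace_add, Matrix.trace_add, Matrix.trace_add, Matrix.trace_smul,
    Matrix.trace_smul, Matrix.trace_smul, Matrix.trace_mul_comm K X]
  simp only [Complex.add_re, Complex.smul_re, smul_eq_mul]
  ring

private lemma trace_conj_conj (S A B : Matrix n n ℂ) :
    ((S * A * S) * (S * B * S)).trace = (((S * S) * A * (S * S)) * B).trace := by
  rw [show (S * A * S) * (S * B * S) = (S * A * S * S * B) * S by noncomm_ring,
    Matrix.trace_mul_comm,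
    show S * (S * A * S * S * B) = ((S * S) * A * (S * S)) * B by noncomm_ring]

end Aux

/-- Saturation of the data processing inequality for the sandwiched
2-Rényi relative entropy (holding in a neighborhood) implies that the Petz map recovers `ρ`:
`σ^{1/2} Λ*(Λ(σ)^{−1/2} Λ(ρ) Λ(σ)^{−1/2}) σ^{1/2} = ρ`. -/
theorem petz_recovery_of_renyiTwo_dpi_saturation
    {n : Type*} [Fintype n] [DecidableEq n] [Nonempty n]
    (Λ Λstar : Matrix n n ℂ →ₗ[ℝ] Matrix n n ℂ)
    (hΛherm : ∀ A : Matrix n n ℂ, A.IsHermitian → (Λ A).IsHermitian)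
    (hadj : ∀ A B : Matrix n n ℂ, (Λstar A * B).trace = (A * Λ B).trace)
    (ρ σ : Matrix n n ℂ) (hρ : ρ.PosDef) (hσ : σ.PosDef)
    (hΛρ : (Λ ρ).PosDef) (hΛσ : (Λ σ).PosDef)
    (hDPI : ∃ ε > 0, ∀ M₁ M₂ : Matrix n n ℂ, M₁.IsHermitian → M₂.IsHermitian →
      ‖M₁‖ < ε → ‖M₂‖ < ε →
      (ρ + M₁).PosDef ∧ (σ + M₂).PosDef ∧ (Λ (ρ + M₁)).PosDef ∧ (Λ (σ + M₂)).PosDef ∧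
      sandwichedRenyiTwo (ρ + M₁) (σ + M₂)
        ≥ sandwichedRenyiTwo (Λ (ρ + M₁)) (Λ (σ + M₂)))
    (hsat : sandwichedRenyiTwo ρ σ = sandwichedRenyiTwo (Λ ρ) (Λ σ)) :
    matPow σ (1/2)
      * Λstar (matPow (Λ σ) (-(1/2)) * Λ ρ * matPow (Λ σ) (-(1/2)))
      * matPow σ (1/2) = ρ := by
  classical
  obtain ⟨ε, hε, hD⟩ := hDPI
  -- Λ is in fact ℂ-linear (commutes with multiplication by I)
  have hΛI : ∀ B : Matrix n n ℂ, Λ (Complex.I • B) = Complex.I • Λ B := by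
    intro B
    apply trace_eq_of_forall
    intro A
    rw [← hadj, mul_smul_comm, Matrix.trace_smul, hadj, ← Matrix.trace_smul,
      ← mul_smul_comm]
  -- Λ commutes with conjTranspose
  have hΛconj : ∀ X : Matrix n n ℂ, Λ Xᴴ = (Λ X)ᴴ := by
    intro X
    set H : Matrix n n ℂ := (1/2 : ℝ) • (X + Xᴴ) with hH
    set K : Matrix n n ℂ := (1/2 : ℝ) • (Complex.I • (Xᴴ - X)) with hK
    have hHh : H.IsHermitian := by
      rw [Matrix.IsHermitian, Matrix.conjTranspose_smul, Matrix.conjTranspose_add,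
        Matrix.conjTranspose_conjTranspose, star_trivial, add_comm]
    have hKh : K.IsHermitian := by
      rw [Matrix.IsHermitian, Matrix.conjTranspose_smul, Matrix.conjTranspose_smul,
        Matrix.conjTranspose_sub, Matrix.conjTranspose_conjTranspose, star_trivial]
      congr 1
      rw [show (star Complex.I) = -Complex.I by simp, neg_smul, ← smul_neg, neg_sub]
    have hXeq : X = H + Complex.I • K := by
      rw [hH, hK, smul_comm Complex.I ((1/2:ℝ)), smul_smul Complex.I Complex.I,
        Complex.I_mul_I]
      module
    have hXconj : Xᴴ = H - Complex.I • K := by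
      rw [hH, hK, smul_comm Complex.I ((1/2:ℝ)), smul_smul Complex.I Complex.I,
        Complex.I_mul_I]
      module
    have hgoal : Λ Xᴴ = Λ H - Complex.I • Λ K := by
      rw [hXconj, map_sub, hΛI]
    have hgoal2 : (Λ X)ᴴ = Λ H - Complex.I • Λ K := by
      rw [hXeq, map_add, hΛI, Matrix.conjTranspose_add, Matrix.conjTranspose_smul,
        (hΛherm H hHh).eq, (hΛherm K hKh).eq,
        show (star Complex.I) = -Complex.I by simp, neg_smul]
      abel
    rw [hgoal, hgoal2]
  -- Λstar preserves Hermitian matrices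
  have hΛstarherm : ∀ A : Matrix n n ℂ, A.IsHermitian → (Λstar A).IsHermitian := by
    intro A hA
    apply trace_eq_of_forall
    intro B
    have e1 : B * (Λstar A)ᴴ = (Λstar A * Bᴴ)ᴴ := by
      rw [Matrix.conjTranspose_mul, Matrix.conjTranspose_conjTranspose]
    have e2 : A * (Λ B)ᴴ = (Λ B * Aᴴ)ᴴ := by
      rw [Matrix.conjTranspose_mul, Matrix.conjTranspose_conjTranspose]
    rw [e1, Matrix.trace_conjTranspose, hadj, hΛconj, e2, Matrix.trace_conjTranspose,
      star_star, hA.eq, Matrix.trace_mul_comm (Λ B) A, ← hadj, Matrix.trace_mul_comm]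
  set S := matPow σ (-(1/4)) with hS
  set T := matPow (Λ σ) (-(1/4)) with hT
  set σh := matPow σ (-(1/2)) with hσh
  set τh := matPow (Λ σ) (-(1/2)) with hτh
  set Z := τh * Λ ρ * τh with hZ
  have hSS : S * S = σh := by rw [hS, hσh, matPow_mul hσ]; norm_num
  have hTT : T * T = τh := by rw [hT, hτh, matPow_mul hΛσ]; norm_num
  have hQS : matPow σ (1/4) * S = 1 := by
    rw [hS]; exact matPow_mul_eq_one hσ (by norm_num)
  have hSQ : S * matPow σ (1/4) = 1 := by
    rw [hS]; exact matPow_mul_eq_one hσ (by norm_num)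
  have hRT : matPow (Λ σ) (1/4) * T = 1 := by
    rw [hT]; exact matPow_mul_eq_one hΛσ (by norm_num)
  have hTR : T * matPow (Λ σ) (1/4) = 1 := by
    rw [hT]; exact matPow_mul_eq_one hΛσ (by norm_num)
  -- the key first-order condition
  have hkey : ∀ M : Matrix n n ℂ, M.IsHermitian →
      (((σh * ρ * σh - Λstar Z) * M).trace).re = 0 := by
    intro M hM
    set δ : ℝ := ε / (‖M‖ + 1) with hδdef
    have hMnorm : (0:ℝ) ≤ ‖M‖ := norm_nonneg M
    have hδ : 0 < δ := by positivity
    set X := S * ρ * S with hX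
    set K := S * M * S with hK
    set Y := T * Λ ρ * T with hY
    set L := T * Λ M * T with hL
    have hsmall : ∀ t : ℝ, |t| < δ → ‖t • M‖ < ε := by
      intro t ht
      rw [norm_smul, Real.norm_eq_abs]
      calc |t| * ‖M‖ ≤ |t| * (‖M‖ + 1) := by nlinarith [abs_nonneg t]
        _ < δ * (‖M‖ + 1) := by nlinarith [abs_nonneg t, ht]
        _ = ε := by rw [hδdef]; field_simp
    have hherm : ∀ t : ℝ, (t • M).IsHermitian := by
      intro t
      rw [Matrix.IsHermitian, Matrix.conjTranspose_smul, hM.eq, star_trivial]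
    have hDt := fun (t : ℝ) (ht : |t| < δ) =>
      hD (t • M) 0 (hherm t) Matrix.isHermitian_zero (hsmall t ht) (by simpa using hε)
    have hconj1 : ∀ t : ℝ, S * (ρ + t • M) * S = X + t • K := by
      intro t
      rw [hX, hK, Matrix.mul_add, Matrix.add_mul, mul_smul_comm, smul_mul_assoc]
    have hconj2 : ∀ t : ℝ, T * (Λ (ρ + t • M)) * T = Y + t • L := by
      intro t
      rw [map_add, LinearMap.map_smul, hY, hL, Matrix.mul_add, Matrix.add_mul,
        mul_smul_comm, smul_mul_assoc]
    have hXKherm : ∀ t : ℝ, (X + t • K).IsHermitian := by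
      intro t
      rw [← hconj1]
      exact conj_isHermitian (hρ.isHermitian.add (hherm t)) (matPow_isHermitian σ _)
    have hYLherm : ∀ t : ℝ, (Y + t • L).IsHermitian := by
      intro t
      rw [← hconj2]
      exact conj_isHermitian (hΛherm _ (hρ.isHermitian.add (hherm t))) (matPow_isHermitian _ _)
    have hpos1 : ∀ t : ℝ, |t| < δ → 0 < (((X + t • K) ^ 2).trace).re := by
      intro t ht
      have hpd := (hDt t ht).1
      have hne : X + t • K ≠ 0 := by
        rw [← hconj1]
        exact conj_ne_zero hQS hSQ (posDef_ne_zero hpd)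
      rw [sq]
      exact herm_trace_sq_pos _ (hXKherm t) hne
    have hpos2 : ∀ t : ℝ, |t| < δ → 0 < (((Y + t • L) ^ 2).trace).re := by
      intro t ht
      have hpd := (hDt t ht).2.2.1
      have hne : Y + t • L ≠ 0 := by
        rw [← hconj2]
        exact conj_ne_zero hRT hTR (posDef_ne_zero hpd)
      rw [sq]
      exact herm_trace_sq_pos _ (hYLherm t) hne
    have hlog1 : ∀ t : ℝ, sandwichedRenyiTwo (ρ + t • M) σ
        = Real.log ((((X + t • K) ^ 2).trace).re) := by
      intro t
      simp only [sandwichedRenyiTwo]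
      rw [← hS, hconj1 t]
    have hlog2 : ∀ t : ℝ, sandwichedRenyiTwo (Λ (ρ + t • M)) (Λ σ)
        = Real.log ((((Y + t • L) ^ 2).trace).re) := by
      intro t
      simp only [sandwichedRenyiTwo]
      rw [← hT, hconj2 t]
    have hFG : ∀ t : ℝ, |t| < δ →
        (((Y + t • L) ^ 2).trace).re ≤ (((X + t • K) ^ 2).trace).re := by
      intro t ht
      have h5 := (hDt t ht).2.2.2.2
      rw [add_zero] at h5
      rw [hlog1 t, hlog2 t] at h5
      have := Real.exp_le_exp.mpr h5
      rwa [Real.exp_log (hpos1 t ht), Real.exp_log (hpos2 t ht)] at this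
    have hzero : ((X ^ 2).trace).re = ((Y ^ 2).trace).re := by
      have hX0 := hpos1 0 (by simpa using hδ)
      have hY0 := hpos2 0 (by simpa using hδ)
      simp only [zero_smul, add_zero] at hX0 hY0
      have hsat' : Real.log (((X ^ 2).trace).re) = Real.log (((Y ^ 2).trace).re) := by
        have e1 := hlog1 0
        have e2 := hlog2 0
        simp only [zero_smul, add_zero] at e1 e2
        rw [← e1, ← e2, hsat]
      calc ((X ^ 2).trace).re = Real.exp (Real.log (((X ^ 2).trace).re)) :=
            (Real.exp_log hX0).symm
        _ = Real.exp (Real.log (((Y ^ 2).trace).re)) := by rw [hsat']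
        _ = ((Y ^ 2).trace).re := Real.exp_log hY0
    have ha0 : 2 * ((X * K).trace).re - 2 * ((Y * L).trace).re = 0 := by
      refine quad_linear_zero (b := ((K ^ 2).trace).re - ((L ^ 2).trace).re) hδ ?_
      intro t ht
      have h1 := hFG t ht
      rw [sq_trace_expand X K t, sq_trace_expand Y L t] at h1
      nlinarith [hzero]
    -- rewrite the two linear coefficients
    have htr1 : (X * K).trace = ((σh * ρ * σh) * M).trace := by
      rw [hX, hK, trace_conj_conj, hSS]
    have htr2 : (Y * L).trace = ((Λstar Z) * M).trace := by
      rw [hY, hL, trace_conj_conj, hTT, ← hZ, hadj Z M, hZ, mul_assoc]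
    rw [Matrix.sub_mul, Matrix.trace_sub, Complex.sub_re]
    rw [htr1, htr2] at ha0
    linarith [ha0]
  -- conclude from the first-order condition
  have hZherm : Z.IsHermitian := conj_isHermitian hΛρ.isHermitian (matPow_isHermitian _ _)
  have hX0herm : (σh * ρ * σh - Λstar Z).IsHermitian :=
    (conj_isHermitian hρ.isHermitian (matPow_isHermitian σ _)).sub (hΛstarherm Z hZherm)
  have hX0 : σh * ρ * σh - Λstar Z = 0 :=
    herm_trace_sq_eq_zero _ hX0herm (hkey _ hX0herm)
  have heq : σh * ρ * σh = Λstar Z := by rwa [sub_eq_zero] at hX0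
  rw [← heq]
  have h1 : matPow σ (1/2) * σh = 1 := by
    rw [hσh]; exact matPow_mul_eq_one hσ (by norm_num)
  have h2 : σh * matPow σ (1/2) = 1 := by
    rw [hσh]; exact matPow_mul_eq_one hσ (by norm_num)
  calc matPow σ (1/2) * (σh * ρ * σh) * matPow σ (1/2)
      = (matPow σ (1/2) * σh) * ρ * (σh * matPow σ (1/2)) := by noncomm_ring
    _ = ρ := by rw [h1, h2, one_mul, mul_one]
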